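/- Let M̃, K_c, N be positive integers with M̃ ≤ N, and set K = N − M̃ and M = M̃ + K_c. Let ν̃ be an M̃×N real matrix, L a K_c×M̃ real matrix, Q = [Q1 | Q2] an N×N real orthogonal matrix (Q1 of size N×M̃, Q2 of size N×K), and S an invertible M̃×M̃ real matrix with ν̃ = S ⬝ Q1ᵀ. Let R_ind be an N×M̃ real matrix and R_dep an N×K_c real matrix, and define the reduced Jacobian J̃ = ν̃ ⬝ (R_ind + R_dep ⬝ L), an M̃×M̃ matrix. Let A be the (N+K_c)×(N+K_c) block matrix whose first N rows are [R_ind | R_dep | Q2] and whose last K_c rows are [−L | I_{K_c} | 0_{K_c×K}]. Then |det(S)| · |det(A)| = |det(J̃)|. -/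

import Mathlib

open Matrix

/-- Auxiliary shuffle equivalence. -/
def shuffleEquiv {Mt Kc N K : ℕ} (e : Fin Mt ⊕ Fin K ≃ Fin N) :
    Fin N ⊕ Fin Kc ≃ (Fin Mt ⊕ Fin Kc) ⊕ Fin K where
  toFun := Sum.elim
    (fun n => Sum.elim (fun m => Sum.inl (Sum.inl m)) (fun k => Sum.inr k) (e.symm n))
    (fun c => Sum.inl (Sum.inr c))
  invFun := Sum.elim
    (Sum.elim (fun m => Sum.inl (e (Sum.inl m))) (fun c => Sum.inr c))
    (fun k => Sum.inl (e (Sum.inr k)))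
  left_inv := by
    rintro (n | c)
    · rcases h : e.symm n with m | k <;>
        simp only [Sum.elim_inl, Sum.elim_inr, h] <;>
        rw [← h, Equiv.apply_symm_apply]
    · simp
  right_inv := by
    rintro ((m | c) | k) <;> simp

/-- The square `N × N` matrix obtained by placing the columns of an `N × M` matrix `X`
before the columns of an `N × K` matrix `Y`, given `M + K = N`. -/
noncomputable def catCols {N M K : ℕ} (h : M + K = N)
    (X : Matrix (Fin N) (Fin M) ℝ) (Y : Matrix (Fin N) (Fin K) ℝ) :
    Matrix (Fin N) (Fin N) ℝ :=
  (Matrix.fromCols X Y).submatrix id (fun j => finSumFinEquiv.symm (Fin.cast h.symm j))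

/-- The `(N + Kc) × (N + Kc)` augmented matrix of the conserved-quantity case: its first `N`
rows are `[Rind | Rdep | Q2]` and its last `Kc` rows are `[-L | I | 0]`, given `Mt + K = N`. -/
noncomputable def augA {Mt Kc N K : ℕ} (h : Mt + K = N)
    (Rind : Matrix (Fin N) (Fin Mt) ℝ) (Rdep : Matrix (Fin N) (Fin Kc) ℝ)
    (Q2 : Matrix (Fin N) (Fin K) ℝ) (L : Matrix (Fin Kc) (Fin Mt) ℝ) :
    Matrix (Fin (N + Kc)) (Fin (N + Kc)) ℝ :=
  (Matrix.fromBlocks (Matrix.fromCols Rind Rdep) Q2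
      (Matrix.fromCols (-L) (1 : Matrix (Fin Kc) (Fin Kc) ℝ)) 0).submatrix
    finSumFinEquiv.symm
    (fun j => (Equiv.sumCongr finSumFinEquiv (Equiv.refl (Fin K))).symm
        (finSumFinEquiv.symm (Fin.cast (by omega : N + Kc = Mt + Kc + K) j)))

/-- with `ν̃ = S * Q1ᵀ` for orthogonal `Q = [Q1 | Q2]` and invertible `S`,
the augmented matrix `A` (first `N` rows `[Rind | Rdep | Q2]`, last `Kc` rows
`[-L | I | 0]`) and the reduced Jacobian `J̃ = ν̃ * (Rind + Rdep * L)` satisfy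
`|det S| * |det A| = |det J̃|`. -/
theorem statement4 {Mt Kc N K : ℕ} (hMt : 0 < Mt) (hKc : 0 < Kc) (hN : 0 < N)
    (hK : Mt + K = N)
    (νt : Matrix (Fin Mt) (Fin N) ℝ)
    (L : Matrix (Fin Kc) (Fin Mt) ℝ)
    (Q1 : Matrix (Fin N) (Fin Mt) ℝ) (Q2 : Matrix (Fin N) (Fin K) ℝ)
    (hQ : (catCols hK Q1 Q2)ᵀ * (catCols hK Q1 Q2) = 1)
    (S : Matrix (Fin Mt) (Fin Mt) ℝ) (hS : IsUnit S.det)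
    (hν : νt = S * Q1ᵀ)
    (Rind : Matrix (Fin N) (Fin Mt) ℝ) (Rdep : Matrix (Fin N) (Fin Kc) ℝ) :
    |S.det| * |(augA hK Rind Rdep Q2 L).det| = |(νt * (Rind + Rdep * L)).det| := by
  classical
  set e : Fin Mt ⊕ Fin K ≃ Fin N := finSumFinEquiv.trans (finCongr hK) with he_def
  have he : ∀ j : Fin N, finSumFinEquiv.symm (Fin.cast hK.symm j) = e.symm j := by
    intro j; simp [he_def, finCongr]
  have hcat : ∀ (X : Matrix (Fin N) (Fin Mt) ℝ) (Y : Matrix (Fin N) (Fin K) ℝ),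
      catCols hK X Y = (fromCols X Y).submatrix id ⇑e.symm := by
    intro X Y; ext i j; simp [catCols, he j]
  -- the big block matrix
  set M0 : Matrix (Fin N ⊕ Fin Kc) ((Fin Mt ⊕ Fin Kc) ⊕ Fin K) ℝ :=
    Matrix.fromBlocks (Matrix.fromCols Rind Rdep) Q2
      (Matrix.fromCols (-L) (1 : Matrix (Fin Kc) (Fin Kc) ℝ)) 0 with hM0
  set g : Fin N ⊕ Fin Kc ≃ (Fin Mt ⊕ Fin Kc) ⊕ Fin K := shuffleEquiv e with hg
  set M1 : Matrix (Fin N ⊕ Fin Kc) (Fin N ⊕ Fin Kc) ℝ := M0.submatrix id ⇑g with hM1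
  have h2 : N + Kc = Mt + Kc + K := by omega
  set c' : Fin (N + Kc) ≃ Fin N ⊕ Fin Kc :=
    ((finCongr h2).trans (finSumFinEquiv.symm.trans
      (Equiv.sumCongr finSumFinEquiv.symm (Equiv.refl (Fin K))))).trans g.symm with hc'
  have h1 : augA hK Rind Rdep Q2 L = M1.submatrix ⇑finSumFinEquiv.symm ⇑c' := by
    ext i j
    simp [augA, hM1, hM0, hc', Matrix.submatrix_apply, Equiv.sumCongr_symm]
  have habs1 : |(augA hK Rind Rdep Q2 L).det| = |M1.det| := by
    rw [h1, abs_det_submatrix_equiv_equiv]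
  -- block structure of M1
  set W : Matrix (Fin Kc) (Fin N) ℝ :=
    (fromCols (-L) (0 : Matrix (Fin Kc) (Fin K) ℝ)).submatrix id ⇑e.symm with hW
  set P : Matrix (Fin N) (Fin N) ℝ := catCols hK Rind Q2 with hP
  have hM1blocks : M1 = Matrix.fromBlocks P Rdep W (1 : Matrix (Fin Kc) (Fin Kc) ℝ) := by
    ext i j
    rcases i with i | i <;> rcases j with j | j <;>
      simp only [hM1, hM0, hP, hW, hcat, Matrix.submatrix_apply, hg, shuffleEquiv,
        Equiv.coe_fn_mk, Sum.elim_inl, Sum.elim_inr, id_eq, Matrix.fromBlocks_apply₁₁,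
        Matrix.fromBlocks_apply₁₂, Matrix.fromBlocks_apply₂₁, Matrix.fromBlocks_apply₂₂]
    · rcases h : e.symm j with m | k <;> simp [h]
    · simp
    · rcases h : e.symm j with m | k <;> simp [h]
    · simp
  have hdetM1 : M1.det = (P - Rdep * W).det := by
    rw [hM1blocks, Matrix.det_fromBlocks_one₂₂]
  set Y : Matrix (Fin N) (Fin Mt) ℝ := Rind + Rdep * L with hY
  have h3 : P - Rdep * W = catCols hK Y Q2 := by
    ext i j
    simp only [hP, hcat, hY, hW, Matrix.sub_apply, Matrix.submatrix_apply, id_eq,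
      Matrix.mul_apply]
    rcases h : e.symm j with m | k
    · simp [h, Matrix.mul_apply, mul_neg, sub_neg_eq_add, Matrix.add_apply,
        Finset.sum_neg_distrib]
    · simp [h]
  -- orthogonality blocks
  have key : ∀ (X : Matrix (Fin N) (Fin Mt) ℝ) (Yk : Matrix (Fin N) (Fin K) ℝ)
      (Z : Matrix (Fin N) (Fin Mt) ℝ) (Wk : Matrix (Fin N) (Fin K) ℝ),
      ((catCols hK X Yk)ᵀ * catCols hK Z Wk).submatrix ⇑e ⇑e =
        Matrix.fromBlocks (Xᵀ * Z) (Xᵀ * Wk) (Ykᵀ * Z) (Ykᵀ * Wk) := by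
    intro X Yk Z Wk
    ext a b
    rcases a with a | a <;> rcases b with b | b <;>
      simp [hcat, Matrix.mul_apply, Matrix.submatrix_apply]
  have horth := key Q1 Q2 Q1 Q2
  rw [hQ, Matrix.submatrix_one_equiv] at horth
  have h12 : Q1ᵀ * Q2 = 0 := by
    ext a b
    have := congrFun (congrFun horth (Sum.inl a)) (Sum.inr b)
    simpa [Matrix.one_apply] using this.symm
  have h22 : Q2ᵀ * Q2 = 1 := by
    ext a b
    have := congrFun (congrFun horth (Sum.inr a)) (Sum.inr b)
    simpa [Matrix.one_apply] using this.symm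
  have hQQ : (catCols hK Q1 Q2).det * (catCols hK Q1 Q2).det = 1 := by
    have := congrArg Matrix.det hQ
    rwa [Matrix.det_mul, Matrix.det_transpose, Matrix.det_one] at this
  have hQabs : |(catCols hK Q1 Q2).det| = 1 := by
    rcases mul_self_eq_one_iff.mp hQQ with h | h <;> simp [h]
  have hdetT : |(catCols hK Y Q2).det| = |(Q1ᵀ * Y).det| := by
    have hmul : |((catCols hK Q1 Q2)ᵀ * catCols hK Y Q2).det| = |(catCols hK Y Q2).det| := by
      rw [Matrix.det_mul, Matrix.det_transpose, abs_mul, hQabs, one_mul]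
    rw [← hmul, ← abs_det_submatrix_equiv_equiv e e, key Q1 Q2 Y Q2, h12, h22,
      Matrix.det_fromBlocks_zero₁₂, Matrix.det_one, mul_one]
  rw [habs1, hdetM1, h3, hdetT, ← abs_mul, ← Matrix.det_mul, hν, Matrix.mul_assoc]
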